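/- Let Z be a real Hilbert space, let T, A : Z → Z, B : ℝ^q → Z, C : Z → ℝ^r be bounded linear operators and D : ℝ^q → ℝ^r linear. Let w : [0,∞) → ℝ^q and w̄ : [0,∞) → ℝ^r be continuous, and suppose x, x̄ : [0,∞) → Z are differentiable with continuous derivatives, x(0) = 0, x̄(0) = 0, T x'(t) = A x(t) + B w(t) and T* x̄'(t) = A* x̄(t) + C* w̄(t) for all t ≥ 0. Define z(t) = C x(t) + D w(t) and z̄(t) = B* x̄(t) + D* w̄(t). Then for every t ≥ 0, ∫₀ᵗ ⟨z̄(θ), w(t−θ)⟩ dθ = ∫₀ᵗ ⟨w̄(θ), z(t−θ)⟩ dθ. -/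

import Mathlib

open MeasureTheory Filter Topology ContinuousLinearMap intervalIntegral
open scoped RealInnerProductSpace

/-- Time-reversed pairing identity between the input–output signals of a primal
PIE system and its dual, with zero initial conditions:
`∫₀ᵗ ⟨z̄(θ), w(t−θ)⟩ dθ = ∫₀ᵗ ⟨w̄(θ), z(t−θ)⟩ dθ`. -/
theorem primal_dual_io_pairing
    {Z : Type*} [NormedAddCommGroup Z] [InnerProductSpace ℝ Z] [CompleteSpace Z]
    {q r : ℕ}
    (T A : Z →L[ℝ] Z)
    (B : EuclideanSpace ℝ (Fin q) →L[ℝ] Z)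
    (C : Z →L[ℝ] EuclideanSpace ℝ (Fin r))
    (D : EuclideanSpace ℝ (Fin q) →L[ℝ] EuclideanSpace ℝ (Fin r))
    (w : ℝ → EuclideanSpace ℝ (Fin q)) (wb : ℝ → EuclideanSpace ℝ (Fin r))
    (hw : Continuous w) (hwb : Continuous wb)
    (x xb : ℝ → Z)
    (hx : ∀ t ∈ Set.Ici (0:ℝ), DifferentiableAt ℝ x t)
    (hx' : ContinuousOn (deriv x) (Set.Ici (0:ℝ)))
    (hxb : ∀ t ∈ Set.Ici (0:ℝ), DifferentiableAt ℝ xb t)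
    (hxb' : ContinuousOn (deriv xb) (Set.Ici (0:ℝ)))
    (hx0 : x 0 = 0) (hxb0 : xb 0 = 0)
    (hxeq : ∀ t ∈ Set.Ici (0:ℝ), T (deriv x t) = A (x t) + B (w t))
    (hxbeq : ∀ t ∈ Set.Ici (0:ℝ),
      (adjoint T) (deriv xb t) = (adjoint A) (xb t) + (adjoint C) (wb t))
    (z : ℝ → EuclideanSpace ℝ (Fin r)) (zb : ℝ → EuclideanSpace ℝ (Fin q))
    (hz : ∀ t, z t = C (x t) + D (w t))
    (hzb : ∀ t, zb t = (adjoint B) (xb t) + (adjoint D) (wb t)) :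
    ∀ t ∈ Set.Ici (0:ℝ),
      (∫ θ in (0:ℝ)..t, ⟪zb θ, w (t - θ)⟫)
        = ∫ θ in (0:ℝ)..t, ⟪wb θ, z (t - θ)⟫ := by
  intro t ht
  rw [Set.mem_Ici] at ht
  have hxc : ContinuousOn x (Set.Ici (0:ℝ)) :=
    fun s hs => (hx s hs).continuousAt.continuousWithinAt
  have hxbc : ContinuousOn xb (Set.Ici (0:ℝ)) :=
    fun s hs => (hxb s hs).continuousAt.continuousWithinAt
  have hmap : ∀ θ ∈ Set.uIcc (0:ℝ) t, t - θ ∈ Set.Ici (0:ℝ) := by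
    intro θ hθ
    rw [Set.uIcc_of_le ht] at hθ
    simp only [Set.mem_Ici]
    linarith [hθ.2]
  have hmap' : ∀ θ ∈ Set.uIcc (0:ℝ) t, θ ∈ Set.Ici (0:ℝ) := by
    intro θ hθ
    rw [Set.uIcc_of_le ht] at hθ
    exact hθ.1
  set g : ℝ → ℝ := fun θ => ⟪wb θ, C (x (t - θ))⟫ - ⟪(adjoint B) (xb θ), w (t - θ)⟫ with hg
  -- continuity of fun θ => x (t - θ) on uIcc
  have hsubc : ContinuousOn (fun θ : ℝ => x (t - θ)) (Set.uIcc 0 t) :=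
    hxc.comp (continuous_const.sub continuous_id).continuousOn hmap
  have hgc : ContinuousOn g (Set.uIcc 0 t) := by
    apply ContinuousOn.sub
    · exact (hwb.continuousOn.inner (C.continuous.comp_continuousOn hsubc))
    · exact (((adjoint B).continuous.comp_continuousOn (hxbc.mono (by
        intro θ hθ; exact hmap' θ hθ))).inner
        ((hw.comp (continuous_const.sub continuous_id)).continuousOn))
  have hgint : IntervalIntegrable g volume 0 t := hgc.intervalIntegrable
  have key : (∫ θ in (0:ℝ)..t, g θ) = 0 := by
    have hmain : ∀ θ ∈ Set.uIcc (0:ℝ) t,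
        HasDerivAt (fun θ => ⟪xb θ, T (x (t - θ))⟫) (g θ) θ := by
      intro θ hθ
      have h1 : HasDerivAt xb (deriv xb θ) θ := (hxb θ (hmap' θ hθ)).hasDerivAt
      have hsub : HasDerivAt (fun θ : ℝ => t - θ) (-1) θ := by
        simpa using (hasDerivAt_id θ).const_sub t
      have h2 : HasDerivAt (fun θ : ℝ => x (t - θ)) ((-1 : ℝ) • deriv x (t - θ)) θ :=
        (hx (t - θ) (hmap θ hθ)).hasDerivAt.scomp θ hsub
      have h3 : HasDerivAt (fun θ : ℝ => T (x (t - θ)))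
          (T ((-1 : ℝ) • deriv x (t - θ))) θ := T.hasFDerivAt.comp_hasDerivAt θ h2
      have h4 := (h1.inner ℝ h3 : HasDerivAt (fun θ => ⟪xb θ, T (x (t - θ))⟫) _ θ)
      convert h4 using 1
      case e'_4 => rfl
      case e'_5 => rfl
      have e1 : ⟪xb θ, T ((-1 : ℝ) • deriv x (t - θ))⟫
          = -⟪xb θ, A (x (t - θ))⟫ - ⟪(adjoint B) (xb θ), w (t - θ)⟫ := by
        rw [T.map_smul, inner_smul_right, hxeq (t - θ) (hmap θ hθ), inner_add_right,
          adjoint_inner_left]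
        ring
      have e2 : ⟪deriv xb θ, T (x (t - θ))⟫
          = ⟪xb θ, A (x (t - θ))⟫ + ⟪wb θ, C (x (t - θ))⟫ := by
        rw [← adjoint_inner_left, hxbeq θ (hmap' θ hθ), inner_add_left,
          adjoint_inner_left, adjoint_inner_left]
      rw [hg]
      simp only []
      rw [e1, e2]
      ring
    have := intervalIntegral.integral_eq_sub_of_hasDerivAt hmain hgint
    rw [this]
    simp [hx0, hxb0]
  -- now conclude
  have hpt : ∀ θ, ⟪zb θ, w (t - θ)⟫ = ⟪wb θ, z (t - θ)⟫ + -(g θ) := by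
    intro θ
    rw [hz, hzb, hg]
    simp only [inner_add_left, inner_add_right, adjoint_inner_left]
    ring
  have hrhs : IntervalIntegrable (fun θ => ⟪wb θ, z (t - θ)⟫) volume 0 t := by
    apply ContinuousOn.intervalIntegrable
    apply hwb.continuousOn.inner
    have hzfun : (fun θ : ℝ => z (t - θ))
        = fun θ : ℝ => C (x (t - θ)) + D (w (t - θ)) := funext fun θ => hz _
    rw [hzfun]
    exact (C.continuous.comp_continuousOn hsubc).add
      (D.continuous.comp (hw.comp (continuous_const.sub continuous_id))).continuousOn
  calc (∫ θ in (0:ℝ)..t, ⟪zb θ, w (t - θ)⟫)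
      = ∫ θ in (0:ℝ)..t, (⟪wb θ, z (t - θ)⟫ + -(g θ)) := by
        simp_rw [hpt]
    _ = (∫ θ in (0:ℝ)..t, ⟪wb θ, z (t - θ)⟫) + ∫ θ in (0:ℝ)..t, -(g θ) := by
        exact intervalIntegral.integral_add hrhs hgint.neg
    _ = ∫ θ in (0:ℝ)..t, ⟪wb θ, z (t - θ)⟫ := by
        rw [intervalIntegral.integral_neg, key]; ring
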